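/- Let R be a commutative ring and A ∈ R^{n×n} with block decomposition [[A₀,C],[B,D]], A₀ of size s×s, δ_s = det A₀, δ_n = det A, and F = adj(A₀). If δ_s is a non-zero-divisor, then det(δ_s·D − B·F·C) = δ_s^{n-s-1}·δ_n. -/

import Mathlib

open Matrix

/-- for a block matrix `A = [[A₀,C],[B,D]]` over a commutative ring,
with `A₀` of size `s × s` (`0 < s`, `0 < m = n − s`), `δ_s = det A₀` a
non-zero-divisor and `F = adj A₀`, one has
`det (δ_s • D − B F C) = δ_s^{n−s−1} · det A`. -/
theorem det_schur_complement_scaled {R : Type*} [CommRing R] {s m : ℕ}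
    (hs : 0 < s) (hm : 0 < m)
    (A₀ : Matrix (Fin s) (Fin s) R) (C : Matrix (Fin s) (Fin m) R)
    (B : Matrix (Fin m) (Fin s) R) (D : Matrix (Fin m) (Fin m) R)
    (hδ : A₀.det ∈ nonZeroDivisors R) :
    (A₀.det • D - B * A₀.adjugate * C).det
      = A₀.det ^ (m - 1) * (Matrix.fromBlocks A₀ C B D).det := by
  set δ := A₀.det with hδdef
  have key : (fromBlocks (1 : Matrix (Fin s) (Fin s) R) 0
      (-(B * A₀.adjugate)) (δ • (1 : Matrix (Fin m) (Fin m) R)))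
      * fromBlocks A₀ C B D
      = fromBlocks A₀ C 0 (δ • D - B * A₀.adjugate * C) := by
    rw [Matrix.fromBlocks_multiply]
    simp [Matrix.mul_assoc, Matrix.adjugate_mul, Matrix.mul_smul,
      Matrix.smul_mul, sub_eq_neg_add]
    exact neg_add_cancel _
  have hdets := congrArg Matrix.det key
  rw [Matrix.det_mul, Matrix.det_fromBlocks_zero₁₂, Matrix.det_fromBlocks_zero₂₁,
    Matrix.det_one, Matrix.det_smul, Matrix.det_one, one_mul, mul_one] at hdets
  have hpow : δ ^ Fintype.card (Fin m) = δ * δ ^ (m - 1) := by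
    rw [Fintype.card_fin]
    conv_lhs => rw [← Nat.sub_add_cancel hm]
    rw [pow_succ']
  rw [hpow] at hdets
  have hc : δ * (δ • D - B * A₀.adjugate * C).det
      = δ * (δ ^ (m - 1) * (fromBlocks A₀ C B D).det) := by
    rw [← hdets]; ring
  exact (mul_cancel_left_mem_nonZeroDivisors hδ).mp hc
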